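/- Let 0 ≤ a ≤ 1 parametrize the limit decomposition ν = a ν' + (1-a) ν'' with ν' supported on {∞} × U and ν'' ∈ G, and suppose k : ℝ^d × U → ℝ is continuous, bounded below, and satisfies the near-monotonicity condition liminf_{‖x‖→∞} min_u k(x,u) > β where β = inf_{μ ∈ G} ∫ k dμ. Extend k to (ℝ^d ∪ {∞}) × U by setting k(∞, u) = liminf_{‖x‖→∞} min_{u'} k(x,u'). Then ∫ k dν = a·k(∞,·)-mass + (1-a)∫ k dν'' ≥ β, with equality only if a = 0 and ∫ k dν'' = β. -/
import Mathlib


open MeasureTheory Filter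

/-- Under the near-monotonicity condition `liminf_{‖x‖→∞} min_u k(x,u) > β`, where
`β` is the optimal ergodic cost (the infimum of `∫ k dμ` over the set `G` of ergodic
occupation measures), any limit decomposition `ν = a ν' + (1-a) ν''` with mass `a` at
infinity (whose cost at infinity is the liminf value `κ∞`) and `ν'' ∈ G` has average cost
`a·κ∞ + (1-a)·∫ k dν'' ≥ β`, with equality only if `a = 0` and `∫ k dν'' = β`. -/
theorem near_monotonicity_prevents_escape_of_mass
    {d : ℕ} {U : Type*} [MetricSpace U] [CompactSpace U] [Nonempty U]
    [MeasurableSpace U] [BorelSpace U]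
    (G : Set (Measure ((Fin d → ℝ) × U)))
    (hG : ∀ μ ∈ G, IsProbabilityMeasure μ)
    (k : (Fin d → ℝ) × U → ℝ)
    (hkc : Continuous k) (B : ℝ) (hbd : ∀ p, B ≤ k p)
    (hint : ∀ μ ∈ G, Integrable k μ)
    (β : ℝ) (hβ : IsGLB ((fun μ : Measure ((Fin d → ℝ) × U) => ∫ p, k p ∂μ) '' G) β)
    (κ : ℝ)
    (hκ : κ = liminf (fun x : (Fin d → ℝ) => ⨅ u : U, k (x, u))
        (comap (fun x : (Fin d → ℝ) => ‖x‖) atTop))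
    (hnm : β < κ)
    (a : ℝ) (ha0 : 0 ≤ a) (ha1 : a ≤ 1)
    (ν'' : Measure ((Fin d → ℝ) × U)) (hν'' : ν'' ∈ G) :
    β ≤ a * κ + (1 - a) * ∫ p, k p ∂ν'' ∧
      (a * κ + (1 - a) * ∫ p, k p ∂ν'' = β → a = 0 ∧ ∫ p, k p ∂ν'' = β) := by
  have hI : β ≤ ∫ p, k p ∂ν'' := hβ.1 ⟨ν'', hν'', rfl⟩
  constructor
  · nlinarith
  · intro heq
    have ha : a = 0 := by nlinarith
    refine ⟨ha, ?_⟩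
    rw [ha] at heq; linarith
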